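/- Let A be a finite multiset of positive integers whose elements are pairwise divisible (i.e., they can be ordered so each divides the next), let s be the maximum element of A, and let c be a positive integer such that s divides c and the sum of elements of A is at least c. Then there exists a sub-multiset B of A whose elements sum exactly to c. -/
import Mathlib


/-- Proposition 1 (divisible subset): from a multiset of pairwise-divisible positive
integers, whose maximum `s` divides `c` and whose total is at least `c`, one can
extract a sub-multiset summing exactly to `c`. -/
theorem divisible_submultiset_sum
    (A : Multiset ℕ) (s c : ℕ)
    (hpos : ∀ a ∈ A, 0 < a)
    (hchain : ∀ a ∈ A, ∀ b ∈ A, a ∣ b ∨ b ∣ a)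
    (hs : s ∈ A) (hmax : ∀ a ∈ A, a ≤ s)
    (hc : 0 < c) (hdvd : s ∣ c) (hsum : c ≤ A.sum) :
    ∃ B : Multiset ℕ, B ≤ A ∧ B.sum = c := by
  induction A using Multiset.strongInductionOn generalizing s c with
  | _ A ih =>
    have hsc : s ≤ c := Nat.le_of_dvd hc hdvd
    rcases eq_or_lt_of_le hsc with h | h
    · exact ⟨{s}, Multiset.singleton_le.mpr hs, by simp [h]⟩
    · set A' := A.erase s with hA'
      have hcons : s ::ₘ A' = A := Multiset.cons_erase hs
      have hsumA : A'.sum + s = A.sum := by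
        rw [← hcons, Multiset.sum_cons]; ring
      have hsum' : c - s ≤ A'.sum := by omega
      have hcs : 0 < c - s := by omega
      have hne : A' ≠ 0 := by
        intro h0; rw [h0] at hsum'; simp at hsum'; omega
      have hne' : A'.toFinset.Nonempty := by
        rw [Multiset.toFinset_nonempty]; exact hne
      set s' := A'.toFinset.max' hne' with hs'
      have hs'mem : s' ∈ A' := by
        have := A'.toFinset.max'_mem hne'
        rwa [Multiset.mem_toFinset] at this
      have hsub : ∀ a ∈ A', a ∈ A := fun a ha => Multiset.mem_of_mem_erase ha
      have hmax' : ∀ a ∈ A', a ≤ s' := fun a ha =>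
        A'.toFinset.le_max' a (Multiset.mem_toFinset.mpr ha)
      have hs'dvds : s' ∣ s := by
        rcases hchain s' (hsub _ hs'mem) s hs with h1 | h1
        · exact h1
        · have h2 : s ≤ s' := Nat.le_of_dvd (hpos _ (hsub _ hs'mem)) h1
          have h3 : s' ≤ s := hmax _ (hsub _ hs'mem)
          have : s' = s := le_antisymm h3 h2
          rw [this]
      have hdvd' : s' ∣ c - s := Nat.dvd_sub (hs'dvds.trans hdvd) hs'dvds
      obtain ⟨B, hB, hBsum⟩ := ih A' (by rw [← hcons]; exact Multiset.lt_cons_self A' s)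
        s' (c - s) (fun a ha => hpos a (hsub a ha))
        (fun a ha b hb => hchain a (hsub a ha) b (hsub b hb))
        hs'mem hmax' hcs hdvd' hsum'
      refine ⟨s ::ₘ B, ?_, ?_⟩
      · rw [← hcons]; exact Multiset.cons_le_cons s hB
      · rw [Multiset.sum_cons, hBsum]; omega
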